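/- Let ℓ ≥ 1 and let u be a finite mass solution of the coagulation-with-emission equations on [0,T]. Then the zeroth moment satisfies m₀(t) = m₀(0) − t for all t ∈ [0,T]. -/

import Mathlib

open Finset Filter Topology

noncomputable section

/-- Total reaction probability mass
`M(t) = ∑_{m,n ≥ 1, m+n ≥ ℓ+1} m n u_m(t) u_n(t)`. -/
def Mfun (ℓ : ℕ) (u : ℕ → ℝ → ℝ) (t : ℝ) : ℝ :=
  ∑' p : ℕ × ℕ,
    if 1 ≤ p.1 ∧ 1 ≤ p.2 ∧ ℓ + 1 ≤ p.1 + p.2 then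
      (p.1 : ℝ) * (p.2 : ℝ) * u p.1 t * u p.2 t
    else 0

/-- Right-hand side of the coagulation-with-emission equation for `u n`:
`(1/M)[∑_{i=1}^{n+ℓ−1} i(n+ℓ−i) u_i u_{n+ℓ−i} − 2 n u_n ∑_{i ≥ max(1, ℓ−n+1)} i u_i]`. -/
def coagRHS (ℓ : ℕ) (u : ℕ → ℝ → ℝ) (n : ℕ) (t : ℝ) : ℝ :=
  (1 / Mfun ℓ u t) *
    ((∑ i ∈ Finset.Icc 1 (n + ℓ - 1),
        (i : ℝ) * ((n + ℓ - i : ℕ) : ℝ) * u i t * u (n + ℓ - i) t)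
      - 2 * (n : ℝ) * u n t *
          (∑' i : ℕ, if max 1 (ℓ + 1 - n) ≤ i then (i : ℝ) * u i t else 0))

/-- `u` is a (C¹) solution of the coagulation-with-emission equations on `[0,T]`,
with `M > 0` on `[0,T]` and nonnegative initial data summing to `1`. -/
structure IsCoagSolution (ℓ : ℕ) (T : ℝ) (u : ℕ → ℝ → ℝ) : Prop where
  contDiff : ∀ n, 1 ≤ n → ContDiffOn ℝ 1 (u n) (Set.Icc 0 T)
  Msummable : ∀ t ∈ Set.Icc (0 : ℝ) T,
    Summable (fun p : ℕ × ℕ =>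
      if 1 ≤ p.1 ∧ 1 ≤ p.2 ∧ ℓ + 1 ≤ p.1 + p.2 then
        (p.1 : ℝ) * (p.2 : ℝ) * u p.1 t * u p.2 t
      else 0)
  Mpos : ∀ t ∈ Set.Icc (0 : ℝ) T, 0 < Mfun ℓ u t
  ode : ∀ n, 1 ≤ n → ∀ t ∈ Set.Icc (0 : ℝ) T,
    HasDerivWithinAt (u n) (coagRHS ℓ u n t) (Set.Icc 0 T) t
  init_nonneg : ∀ n, 1 ≤ n → 0 ≤ u n 0
  init_sum : HasSum (fun i : ℕ => if 1 ≤ i then u i 0 else 0) 1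

/-- A finite mass solution: a nonnegative solution whose first-moment series
`m₁(t) = ∑_{i ≥ 1} i u_i(t)` converges uniformly on `[0,T]`. -/
structure IsFiniteMassSolution (ℓ : ℕ) (T : ℝ) (u : ℕ → ℝ → ℝ)
    extends IsCoagSolution ℓ T u : Prop where
  nonneg : ∀ n, 1 ≤ n → ∀ t ∈ Set.Icc (0 : ℝ) T, 0 ≤ u n t
  m1_unif : TendstoUniformlyOn
    (fun N t => ∑ i ∈ Finset.range N, (i : ℝ) * u i t)
    (fun t => ∑' i : ℕ, (i : ℝ) * u i t) atTop (Set.Icc 0 T)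

/-- The `k`-th moment `m_k(t) = ∑_{i ≥ 1} i^k u_i(t)`. -/
def moment (u : ℕ → ℝ → ℝ) (k : ℕ) (t : ℝ) : ℝ :=
  ∑' i : ℕ, if 1 ≤ i then (i : ℝ) ^ k * u i t else 0

/-! ### Auxiliary definitions -/

/-- first moment -/
def m1f (u : ℕ → ℝ → ℝ) (t : ℝ) : ℝ := ∑' i : ℕ, (i : ℝ) * u i t

/-- tail of the first moment -/
def tailf (u : ℕ → ℝ → ℝ) (K : ℕ) (t : ℝ) : ℝ :=
  ∑' i : ℕ, if K ≤ i then (i : ℝ) * u i t else 0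

/-- the summand of `Mfun` -/
def fp (ℓ : ℕ) (u : ℕ → ℝ → ℝ) (t : ℝ) (p : ℕ × ℕ) : ℝ :=
  if 1 ≤ p.1 ∧ 1 ≤ p.2 ∧ ℓ + 1 ≤ p.1 + p.2 then
    (p.1 : ℝ) * (p.2 : ℝ) * u p.1 t * u p.2 t
  else 0

section helpers

variable {ℓ : ℕ} {T : ℝ} {u : ℕ → ℝ → ℝ}

theorem term_nonneg (hu : IsFiniteMassSolution ℓ T u) {t : ℝ}
    (ht : t ∈ Set.Icc (0 : ℝ) T) (i : ℕ) : 0 ≤ (i : ℝ) * u i t := by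
  rcases Nat.eq_zero_or_pos i with h | h
  · simp [h]
  · exact mul_nonneg (by positivity) (hu.nonneg i h t ht)

theorem m1_tendsto_at (hu : IsFiniteMassSolution ℓ T u) {t : ℝ}
    (ht : t ∈ Set.Icc (0 : ℝ) T) :
    Tendsto (fun N => ∑ i ∈ Finset.range N, (i : ℝ) * u i t) atTop (𝓝 (m1f u t)) :=
  hu.m1_unif.tendsto_at ht

theorem m1_summable (hu : IsFiniteMassSolution ℓ T u) {t : ℝ}
    (ht : t ∈ Set.Icc (0 : ℝ) T) : Summable (fun i : ℕ => (i : ℝ) * u i t) := by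
  have hmono : Monotone (fun N => ∑ i ∈ Finset.range N, (i : ℝ) * u i t) := by
    apply monotone_nat_of_le_succ
    intro N
    rw [Finset.sum_range_succ]
    have := term_nonneg hu ht N
    linarith
  exact summable_of_sum_range_le (term_nonneg hu ht)
    (fun n => hmono.ge_of_tendsto (m1_tendsto_at hu ht) n)

theorem m1_nonneg (hu : IsFiniteMassSolution ℓ T u) {t : ℝ}
    (ht : t ∈ Set.Icc (0 : ℝ) T) : 0 ≤ m1f u t :=
  tsum_nonneg (term_nonneg hu ht)

theorem tail_term_nonneg (hu : IsFiniteMassSolution ℓ T u) {t : ℝ}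
    (ht : t ∈ Set.Icc (0 : ℝ) T) (K i : ℕ) :
    0 ≤ if K ≤ i then (i : ℝ) * u i t else 0 := by
  split
  · exact term_nonneg hu ht i
  · exact le_rfl

theorem tail_summable (hu : IsFiniteMassSolution ℓ T u) {t : ℝ}
    (ht : t ∈ Set.Icc (0 : ℝ) T) (K : ℕ) :
    Summable (fun i : ℕ => if K ≤ i then (i : ℝ) * u i t else 0) := by
  apply Summable.of_nonneg_of_le (tail_term_nonneg hu ht K) _ (m1_summable hu ht)
  intro i
  split
  · exact le_rfl
  · exact term_nonneg hu ht i

theorem tail_nonneg (hu : IsFiniteMassSolution ℓ T u) {t : ℝ}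
    (ht : t ∈ Set.Icc (0 : ℝ) T) (K : ℕ) : 0 ≤ tailf u K t :=
  tsum_nonneg (tail_term_nonneg hu ht K)

theorem tail_eq (hu : IsFiniteMassSolution ℓ T u) {t : ℝ}
    (ht : t ∈ Set.Icc (0 : ℝ) T) (K : ℕ) :
    tailf u K t = m1f u t - ∑ i ∈ Finset.range K, (i : ℝ) * u i t := by
  have hsplit : ∀ i : ℕ, (i : ℝ) * u i t =
      (if K ≤ i then (i : ℝ) * u i t else 0) + (if K ≤ i then 0 else (i : ℝ) * u i t) := by
    intro i; split <;> ring
  have h2 : Summable (fun i : ℕ => if K ≤ i then 0 else (i : ℝ) * u i t) := by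
    apply Summable.of_nonneg_of_le _ _ (m1_summable hu ht)
    · intro i; split
      · exact le_rfl
      · exact term_nonneg hu ht i
    · intro i; split
      · exact term_nonneg hu ht i
      · exact le_rfl
  have h2sum : (∑' i : ℕ, if K ≤ i then 0 else (i : ℝ) * u i t)
      = ∑ i ∈ Finset.range K, (i : ℝ) * u i t := by
    rw [tsum_eq_sum (s := Finset.range K)]
    · apply Finset.sum_congr rfl
      intro i hi
      rw [if_neg]
      simp only [Finset.mem_range] at hi
      omega
    · intro i hi
      simp only [Finset.mem_range, not_lt] at hi
      rw [if_pos hi]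
  have : m1f u t = tailf u K t + ∑ i ∈ Finset.range K, (i : ℝ) * u i t := by
    unfold m1f tailf
    rw [← h2sum, ← Summable.tsum_add (tail_summable hu ht K) h2]
    exact tsum_congr hsplit
  linarith

theorem tail_le_m1 (hu : IsFiniteMassSolution ℓ T u) {t : ℝ}
    (ht : t ∈ Set.Icc (0 : ℝ) T) (K : ℕ) : tailf u K t ≤ m1f u t := by
  rw [tail_eq hu ht K]
  have : 0 ≤ ∑ i ∈ Finset.range K, (i : ℝ) * u i t :=
    Finset.sum_nonneg fun i _ => term_nonneg hu ht i
  linarith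

theorem tail_small (hu : IsFiniteMassSolution ℓ T u) {ε : ℝ} (hε : 0 < ε) :
    ∀ᶠ K in atTop, ∀ t ∈ Set.Icc (0 : ℝ) T, tailf u K t < ε := by
  have h := Metric.tendstoUniformlyOn_iff.mp hu.m1_unif ε hε
  filter_upwards [h] with K hK t ht
  have h1 := hK t ht
  rw [Real.dist_eq] at h1
  have h2 := tail_eq hu ht K
  have h3 := tail_nonneg hu ht K
  have : tailf u K t ≤ |m1f u t - ∑ i ∈ Finset.range K, (i : ℝ) * u i t| := by
    rw [← h2]; exact le_abs_self _
  calc tailf u K t ≤ _ := this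
    _ < ε := h1

end helpers

section helpers2

variable {ℓ : ℕ} {T : ℝ} {u : ℕ → ℝ → ℝ}

theorem term_contOn (hu : IsFiniteMassSolution ℓ T u) (i : ℕ) :
    ContinuousOn (fun t => (i : ℝ) * u i t) (Set.Icc 0 T) := by
  rcases Nat.eq_zero_or_pos i with h | h
  · subst h; simp only [Nat.cast_zero, zero_mul]; exact continuousOn_const
  · exact continuousOn_const.mul (hu.contDiff i h).continuousOn

theorem m1_contOn (hu : IsFiniteMassSolution ℓ T u) :
    ContinuousOn (m1f u) (Set.Icc 0 T) := by
  apply hu.m1_unif.continuousOn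
  refine Filter.Eventually.frequently ?_
  filter_upwards with N
  exact continuousOn_finset_sum _ (fun i _ => term_contOn hu i)

theorem tail_contOn (hu : IsFiniteMassSolution ℓ T u) (K : ℕ) :
    ContinuousOn (tailf u K) (Set.Icc 0 T) := by
  have : ContinuousOn (fun t => m1f u t - ∑ i ∈ Finset.range K, (i : ℝ) * u i t)
      (Set.Icc 0 T) :=
    (m1_contOn hu).sub (continuousOn_finset_sum _ (fun i _ => term_contOn hu i))
  exact this.congr (fun t ht => tail_eq hu ht K)

theorem exists_m1_bound (hu : IsFiniteMassSolution ℓ T u) :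
    ∃ C : ℝ, 1 ≤ C ∧ ∀ t ∈ Set.Icc (0 : ℝ) T, m1f u t ≤ C := by
  obtain ⟨C, hC⟩ := isCompact_Icc.exists_bound_of_continuousOn (m1_contOn hu)
  refine ⟨max C 1, le_max_right _ _, fun t ht => ?_⟩
  calc m1f u t ≤ ‖m1f u t‖ := le_abs_self _
    _ ≤ C := hC t ht
    _ ≤ max C 1 := le_max_left _ _

/-- product summability on `ℕ × ℕ` -/
theorem prod_summable {b c : ℕ → ℝ} (hb : Summable b) (hc : Summable c)
    (hb0 : ∀ i, 0 ≤ b i) (hc0 : ∀ i, 0 ≤ c i) :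
    Summable (fun p : ℕ × ℕ => b p.1 * c p.2) :=
  hb.mul_of_nonneg hc hb0 hc0

theorem prod_tsum {b c : ℕ → ℝ} (hb : Summable b) (hc : Summable c)
    (hb0 : ∀ i, 0 ≤ b i) (hc0 : ∀ i, 0 ≤ c i) :
    (∑' p : ℕ × ℕ, b p.1 * c p.2) = (∑' i, b i) * (∑' i, c i) := by
  rw [Summable.tsum_prod' (prod_summable hb hc hb0 hc0) (fun n => hc.mul_left (b n))]
  calc (∑' (n : ℕ) (i : ℕ), b n * c i) = ∑' (n : ℕ), b n * ∑' i, c i := by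
        apply tsum_congr; intro n; exact tsum_mul_left
    _ = (∑' i, b i) * (∑' i, c i) := tsum_mul_right

end helpers2

section helpers3

variable {ℓ : ℕ} {T : ℝ} {u : ℕ → ℝ → ℝ}

theorem fp_nonneg (hu : IsFiniteMassSolution ℓ T u) {t : ℝ}
    (ht : t ∈ Set.Icc (0 : ℝ) T) (p : ℕ × ℕ) : 0 ≤ fp ℓ u t p := by
  unfold fp
  split
  · next h =>
    have h1 := hu.nonneg p.1 h.1 t ht
    have h2 := hu.nonneg p.2 h.2.1 t ht
    positivity
  · exact le_rfl

theorem fp_le (hu : IsFiniteMassSolution ℓ T u) {t : ℝ}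
    (ht : t ∈ Set.Icc (0 : ℝ) T) (p : ℕ × ℕ) :
    fp ℓ u t p ≤ ((p.1 : ℝ) * u p.1 t) * ((p.2 : ℝ) * u p.2 t) := by
  unfold fp
  split
  · apply le_of_eq; ring
  · exact mul_nonneg (term_nonneg hu ht p.1) (term_nonneg hu ht p.2)

theorem fp_summable (hu : IsFiniteMassSolution ℓ T u) {t : ℝ}
    (ht : t ∈ Set.Icc (0 : ℝ) T) : Summable (fp ℓ u t) := hu.Msummable t ht

theorem Mfun_eq_tsum_fp : Mfun ℓ u t = ∑' p : ℕ × ℕ, fp ℓ u t p := rfl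

/-- continuous version of `Mfun` -/
def Mc (ℓ : ℕ) (u : ℕ → ℝ → ℝ) (t : ℝ) : ℝ :=
  (m1f u t) ^ 2 - ∑ p ∈ Finset.Icc 1 ℓ ×ˢ Finset.Icc 1 ℓ,
    (if p.1 + p.2 ≤ ℓ then (p.1 : ℝ) * (p.2 : ℝ) * u p.1 t * u p.2 t else 0)

/-- low-order part -/
def lowf (ℓ : ℕ) (u : ℕ → ℝ → ℝ) (t : ℝ) (p : ℕ × ℕ) : ℝ :=
  if 1 ≤ p.1 ∧ 1 ≤ p.2 ∧ p.1 + p.2 ≤ ℓ then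
    (p.1 : ℝ) * (p.2 : ℝ) * u p.1 t * u p.2 t else 0

set_option maxHeartbeats 1000000 in
theorem Mfun_eq_Mc (hu : IsFiniteMassSolution ℓ T u) {t : ℝ}
    (ht : t ∈ Set.Icc (0 : ℝ) T) : Mfun ℓ u t = Mc ℓ u t := by
  set low : ℕ × ℕ → ℝ := lowf ℓ u t with hlow'
  have hlow : ∀ p : ℕ × ℕ, low p =
      if 1 ≤ p.1 ∧ 1 ≤ p.2 ∧ p.1 + p.2 ≤ ℓ then
        (p.1 : ℝ) * (p.2 : ℝ) * u p.1 t * u p.2 t else 0 := fun p => rfl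
  have hsplit : ∀ p : ℕ × ℕ,
      ((p.1 : ℝ) * u p.1 t) * ((p.2 : ℝ) * u p.2 t) = fp ℓ u t p + low p := by
    intro p
    simp only [fp, hlow p]
    split_ifs with ha hb hb
    · omega
    · ring
    · ring
    · have : p.1 = 0 ∨ p.2 = 0 := by omega
      rcases this with h | h <;> simp [h]
  have hlow_sum : Summable low :=
    summable_of_ne_finset_zero (s := Finset.Icc 1 ℓ ×ˢ Finset.Icc 1 ℓ) (by
      intro p hp
      rw [hlow p, if_neg]
      intro h
      apply hp
      simp only [Finset.mem_product, Finset.mem_Icc]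
      omega)
  have hfull : Summable (fun p : ℕ × ℕ => ((p.1 : ℝ) * u p.1 t) * ((p.2 : ℝ) * u p.2 t)) :=
    prod_summable (m1_summable hu ht) (m1_summable hu ht)
      (term_nonneg hu ht) (term_nonneg hu ht)
  have h1 : (m1f u t) ^ 2 = Mfun ℓ u t + ∑' p, low p := by
    have := prod_tsum (m1_summable hu ht) (m1_summable hu ht)
      (term_nonneg hu ht) (term_nonneg hu ht)
    rw [sq]
    unfold m1f
    rw [← this]
    rw [Mfun_eq_tsum_fp, ← Summable.tsum_add (fp_summable hu ht) hlow_sum]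
    exact tsum_congr hsplit
  have h2 : (∑' p, low p) = ∑ p ∈ Finset.Icc 1 ℓ ×ˢ Finset.Icc 1 ℓ,
      (if p.1 + p.2 ≤ ℓ then (p.1 : ℝ) * (p.2 : ℝ) * u p.1 t * u p.2 t else 0) := by
    rw [tsum_eq_sum (s := Finset.Icc 1 ℓ ×ˢ Finset.Icc 1 ℓ)]
    · apply Finset.sum_congr rfl
      intro p hp
      simp only [Finset.mem_product, Finset.mem_Icc] at hp
      rw [hlow p]
      by_cases h : p.1 + p.2 ≤ ℓ
      · rw [if_pos ⟨hp.1.1, hp.2.1, h⟩, if_pos h]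
      · rw [if_neg (fun hh => h hh.2.2), if_neg h]
    · intro p hp
      rw [hlow p, if_neg]
      intro h
      apply hp
      simp only [Finset.mem_product, Finset.mem_Icc]
      omega
  rw [Mc, ← h2]
  linarith

theorem Mc_contOn (hu : IsFiniteMassSolution ℓ T u) :
    ContinuousOn (Mc ℓ u) (Set.Icc 0 T) := by
  apply ContinuousOn.sub
  · exact (m1_contOn hu).pow 2
  · apply continuousOn_finset_sum
    intro p hp
    simp only [Finset.mem_product, Finset.mem_Icc] at hp
    by_cases h : p.1 + p.2 ≤ ℓ
    · simp only [if_pos h]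
      exact ((continuousOn_const.mul (hu.contDiff p.1 hp.1.1).continuousOn).mul
        (hu.contDiff p.2 hp.2.1).continuousOn)
    · simp only [if_neg h]
      exact continuousOn_const

theorem Mfun_contOn (hu : IsFiniteMassSolution ℓ T u) :
    ContinuousOn (Mfun ℓ u) (Set.Icc 0 T) :=
  (Mc_contOn hu).congr (fun t ht => Mfun_eq_Mc hu ht)

theorem exists_M_lb (hu : IsFiniteMassSolution ℓ T u) (hT : 0 < T) :
    ∃ δ : ℝ, 0 < δ ∧ ∀ t ∈ Set.Icc (0 : ℝ) T, δ ≤ Mfun ℓ u t := by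
  obtain ⟨t0, ht0, hmin⟩ := isCompact_Icc.exists_isMinOn
    (Set.nonempty_Icc.mpr hT.le) (Mfun_contOn hu)
  exact ⟨Mfun ℓ u t0, hu.Mpos t0 ht0, fun t ht => hmin ht⟩

end helpers3

section helpers4

variable {ℓ : ℕ} {T : ℝ} {u : ℕ → ℝ → ℝ}

/-- summand of the row decomposition of `Mfun` -/
def gB (ℓ : ℕ) (u : ℕ → ℝ → ℝ) (t : ℝ) (n : ℕ) : ℝ :=
  if 1 ≤ n then ((n : ℝ) * u n t) * tailf u (max 1 (ℓ + 1 - n)) t else 0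

theorem fp_row (hu : IsFiniteMassSolution ℓ T u) (t : ℝ) {n : ℕ} (hn : 1 ≤ n) (i : ℕ) :
    fp ℓ u t (n, i) = ((n : ℝ) * u n t) *
      (if max 1 (ℓ + 1 - n) ≤ i then (i : ℝ) * u i t else 0) := by
  unfold fp
  by_cases h : max 1 (ℓ + 1 - n) ≤ i
  · rw [if_pos ⟨hn, by omega, by omega⟩, if_pos h]
    ring
  · rw [if_neg (by omega), if_neg h, mul_zero]

theorem gB_nonneg (hu : IsFiniteMassSolution ℓ T u) {t : ℝ}
    (ht : t ∈ Set.Icc (0 : ℝ) T) (n : ℕ) : 0 ≤ gB ℓ u t n := by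
  unfold gB
  split
  · exact mul_nonneg (term_nonneg hu ht n) (tail_nonneg hu ht _)
  · exact le_rfl

theorem gB_le (hu : IsFiniteMassSolution ℓ T u) {t : ℝ}
    (ht : t ∈ Set.Icc (0 : ℝ) T) {C : ℝ} (hC : ∀ s ∈ Set.Icc (0 : ℝ) T, m1f u s ≤ C)
    (n : ℕ) : gB ℓ u t n ≤ C * ((n : ℝ) * u n t) := by
  have hm1C : tailf u (max 1 (ℓ + 1 - n)) t ≤ C :=
    le_trans (tail_le_m1 hu ht _) (hC t ht)
  unfold gB
  split
  · calc ((n : ℝ) * u n t) * tailf u (max 1 (ℓ + 1 - n)) t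
        ≤ ((n : ℝ) * u n t) * C := mul_le_mul_of_nonneg_left hm1C (term_nonneg hu ht n)
      _ = C * ((n : ℝ) * u n t) := by ring
  · have h0 : (0 : ℝ) ≤ m1f u t := m1_nonneg hu ht
    have hC0 : 0 ≤ C := le_trans h0 (hC t ht)
    exact mul_nonneg hC0 (term_nonneg hu ht n)

theorem gB_summable (hu : IsFiniteMassSolution ℓ T u) {t : ℝ}
    (ht : t ∈ Set.Icc (0 : ℝ) T) : Summable (gB ℓ u t) := by
  obtain ⟨C, _, hC⟩ := exists_m1_bound hu
  exact Summable.of_nonneg_of_le (gB_nonneg hu ht) (gB_le hu ht hC)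
    ((m1_summable hu ht).mul_left C)

theorem Mfun_eq_tsum_gB (hu : IsFiniteMassSolution ℓ T u) {t : ℝ}
    (ht : t ∈ Set.Icc (0 : ℝ) T) : Mfun ℓ u t = ∑' n : ℕ, gB ℓ u t n := by
  rw [Mfun_eq_tsum_fp]
  have hrow : ∀ n : ℕ, Summable (fun i => fp ℓ u t (n, i)) := by
    intro n
    rcases Nat.eq_zero_or_pos n with h | h
    · subst h
      have : (fun i => fp ℓ u t (0, i)) = fun _ => (0 : ℝ) := by
        funext i; unfold fp; rw [if_neg (by omega)]
      rw [this]; exact summable_zero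
    · have : (fun i => fp ℓ u t (n, i)) = fun i => ((n : ℝ) * u n t) *
          (if max 1 (ℓ + 1 - n) ≤ i then (i : ℝ) * u i t else 0) := by
        funext i; exact fp_row hu t h i
      rw [this]
      exact (tail_summable hu ht _).mul_left _
  rw [Summable.tsum_prod' (fp_summable hu ht) hrow]
  apply tsum_congr
  intro n
  rcases Nat.eq_zero_or_pos n with h | h
  · subst h
    have : (fun i => fp ℓ u t (0, i)) = fun _ => (0 : ℝ) := by
      funext i; unfold fp; rw [if_neg (by omega)]
    rw [show gB ℓ u t 0 = 0 by unfold gB; rw [if_neg (by omega)]]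
    rw [tsum_congr (fun i => congrFun this i)]
    exact tsum_zero
  · rw [tsum_congr (fun i => fp_row hu t h i), tsum_mul_left]
    unfold gB tailf
    rw [if_pos (show 1 ≤ n from h)]

end helpers4

section helpers5

variable {ℓ : ℕ} {T : ℝ} {u : ℕ → ℝ → ℝ}

theorem B_tail_bound (hu : IsFiniteMassSolution ℓ T u) {t : ℝ}
    (ht : t ∈ Set.Icc (0 : ℝ) T) {C : ℝ} (hC : ∀ s ∈ Set.Icc (0 : ℝ) T, m1f u s ≤ C)
    (N : ℕ) :
    0 ≤ Mfun ℓ u t - ∑ n ∈ Finset.range (N + 1), gB ℓ u t n ∧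
    Mfun ℓ u t - ∑ n ∈ Finset.range (N + 1), gB ℓ u t n ≤ C * tailf u (N + 1) t := by
  have hC0 : 0 ≤ C := le_trans (m1_nonneg hu ht) (hC t ht)
  have hkey := Summable.sum_add_tsum_compl (s := Finset.range (N + 1)) (gB_summable hu ht)
  have hdiff : Mfun ℓ u t - ∑ n ∈ Finset.range (N + 1), gB ℓ u t n
      = ∑' (x : ↑((↑(Finset.range (N + 1)) : Set ℕ)ᶜ)), gB ℓ u t ↑x := by
    rw [Mfun_eq_tsum_gB hu ht, ← hkey]; ring
  rw [hdiff]
  constructor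
  · exact tsum_nonneg (fun x => gB_nonneg hu ht _)
  · have hle : (∑' (x : ↑((↑(Finset.range (N + 1)) : Set ℕ)ᶜ)), gB ℓ u t ↑x)
        ≤ ∑' n : ℕ, C * (if N + 1 ≤ n then (n : ℝ) * u n t else 0) := by
      apply Summable.tsum_le_tsum_of_inj (Subtype.val)
        Subtype.val_injective
      · intro c _
        have := tail_term_nonneg hu ht (N + 1) c
        positivity
      · rintro ⟨n, hn⟩
        simp only [Set.mem_compl_iff, Finset.coe_range, Set.mem_Iio, not_lt] at hn
        calc gB ℓ u t n ≤ C * ((n : ℝ) * u n t) := gB_le hu ht hC n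
          _ = C * (if N + 1 ≤ n then (n : ℝ) * u n t else 0) := by rw [if_pos hn]
      · exact (gB_summable hu ht).subtype _
      · exact (tail_summable hu ht (N + 1)).mul_left C
    calc (∑' (x : ↑((↑(Finset.range (N + 1)) : Set ℕ)ᶜ)), gB ℓ u t ↑x)
        ≤ ∑' n : ℕ, C * (if N + 1 ≤ n then (n : ℝ) * u n t else 0) := hle
      _ = C * tailf u (N + 1) t := tsum_mul_left

/-- index set for the coagulation part -/
def Qset (ℓ N : ℕ) : Finset (ℕ × ℕ) :=
  (Finset.range (N + ℓ + 1) ×ˢ Finset.range (N + ℓ + 1)).filter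
    (fun p => 1 ≤ p.1 ∧ 1 ≤ p.2 ∧ ℓ + 1 ≤ p.1 + p.2 ∧ p.1 + p.2 ≤ N + ℓ)

theorem A_eq (hℓ : 1 ≤ ℓ) (N : ℕ) (t : ℝ) :
    (∑ n ∈ Finset.Icc 1 N, ∑ i ∈ Finset.Icc 1 (n + ℓ - 1),
      (i : ℝ) * ((n + ℓ - i : ℕ) : ℝ) * u i t * u (n + ℓ - i) t)
    = ∑ p ∈ Qset ℓ N, fp ℓ u t p := by
  rw [Finset.sum_sigma' (Finset.Icc 1 N) (fun n => Finset.Icc 1 (n + ℓ - 1))]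
  apply Finset.sum_nbij' (i := fun q : Σ _ : ℕ, ℕ => ((q.2, q.1 + ℓ - q.2) : ℕ × ℕ))
    (j := fun p : ℕ × ℕ => (⟨p.1 + p.2 - ℓ, p.1⟩ : Σ _ : ℕ, ℕ))
  · rintro ⟨n, i⟩ hq
    simp only [Finset.mem_sigma, Finset.mem_Icc] at hq
    simp only [Qset, Finset.mem_filter, Finset.mem_product, Finset.mem_range]
    omega
  · intro p hp
    simp only [Qset, Finset.mem_filter, Finset.mem_product, Finset.mem_range] at hp
    simp only [Finset.mem_sigma, Finset.mem_Icc]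
    omega
  · rintro ⟨n, i⟩ hq
    simp only [Finset.mem_sigma, Finset.mem_Icc] at hq
    have h1 : i + (n + ℓ - i) - ℓ = n := by omega
    simp only [h1]
  · intro p hp
    simp only [Qset, Finset.mem_filter, Finset.mem_product, Finset.mem_range] at hp
    have h1 : p.1 + p.2 - ℓ + ℓ - p.1 = p.2 := by omega
    simp only [h1]
  · rintro ⟨n, i⟩ hq
    simp only [Finset.mem_sigma, Finset.mem_Icc] at hq
    have hcond : 1 ≤ i ∧ 1 ≤ n + ℓ - i ∧ ℓ + 1 ≤ i + (n + ℓ - i) := by omega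
    simp only [fp, if_pos hcond]

end helpers5

section helpers6

variable {ℓ : ℕ} {T : ℝ} {u : ℕ → ℝ → ℝ}

set_option maxHeartbeats 1000000 in
theorem A_tail_bound (hu : IsFiniteMassSolution ℓ T u) {t : ℝ}
    (ht : t ∈ Set.Icc (0 : ℝ) T) {C : ℝ} (hC : ∀ s ∈ Set.Icc (0 : ℝ) T, m1f u s ≤ C)
    (N : ℕ) :
    0 ≤ Mfun ℓ u t - ∑ p ∈ Qset ℓ N, fp ℓ u t p ∧
    Mfun ℓ u t - ∑ p ∈ Qset ℓ N, fp ℓ u t p ≤ 2 * C * tailf u (N / 2 + 1) t := by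
  have hC0 : 0 ≤ C := le_trans (m1_nonneg hu ht) (hC t ht)
  set K := N / 2 + 1 with hK
  set h : ℕ × ℕ → ℝ := fun p =>
    (if K ≤ p.1 then (p.1 : ℝ) * u p.1 t else 0) * ((p.2 : ℝ) * u p.2 t)
    + ((p.1 : ℝ) * u p.1 t) * (if K ≤ p.2 then (p.2 : ℝ) * u p.2 t else 0) with hh
  have hh_nonneg : ∀ p, 0 ≤ h p := by
    intro p
    apply add_nonneg
    · exact mul_nonneg (tail_term_nonneg hu ht K p.1) (term_nonneg hu ht p.2)
    · exact mul_nonneg (term_nonneg hu ht p.1) (tail_term_nonneg hu ht K p.2)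
  have hh_summable : Summable h :=
    (prod_summable (tail_summable hu ht K) (m1_summable hu ht)
        (tail_term_nonneg hu ht K) (term_nonneg hu ht)).add
      (prod_summable (m1_summable hu ht) (tail_summable hu ht K)
        (term_nonneg hu ht) (tail_term_nonneg hu ht K))
  have hh_tsum : (∑' p : ℕ × ℕ, h p) = tailf u K t * m1f u t + m1f u t * tailf u K t := by
    rw [hh]
    rw [Summable.tsum_add (prod_summable (tail_summable hu ht K) (m1_summable hu ht)
        (tail_term_nonneg hu ht K) (term_nonneg hu ht))
      (prod_summable (m1_summable hu ht) (tail_summable hu ht K)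
        (term_nonneg hu ht) (tail_term_nonneg hu ht K))]
    rw [prod_tsum (tail_summable hu ht K) (m1_summable hu ht)
        (tail_term_nonneg hu ht K) (term_nonneg hu ht),
      prod_tsum (m1_summable hu ht) (tail_summable hu ht K)
        (term_nonneg hu ht) (tail_term_nonneg hu ht K)]
    rfl
  have hkey := Summable.sum_add_tsum_compl (s := Qset ℓ N) (fp_summable hu ht)
  have hdiff : Mfun ℓ u t - ∑ p ∈ Qset ℓ N, fp ℓ u t p
      = ∑' (x : ↑((↑(Qset ℓ N) : Set (ℕ × ℕ))ᶜ)), fp ℓ u t ↑x := by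
    rw [Mfun_eq_tsum_fp, ← hkey]; ring
  rw [hdiff]
  constructor
  · exact tsum_nonneg (fun x => fp_nonneg hu ht _)
  · have hle : (∑' (x : ↑((↑(Qset ℓ N) : Set (ℕ × ℕ))ᶜ)), fp ℓ u t ↑x) ≤ ∑' p, h p := by
      apply Summable.tsum_le_tsum_of_inj (Subtype.val) Subtype.val_injective
      · intro c _; exact hh_nonneg c
      · rintro ⟨p, hp⟩
        simp only [Set.mem_compl_iff, Finset.mem_coe] at hp
        by_cases hcond : 1 ≤ p.1 ∧ 1 ≤ p.2 ∧ ℓ + 1 ≤ p.1 + p.2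
        · have hs : N + ℓ + 1 ≤ p.1 + p.2 := by
            by_contra hs
            apply hp
            simp only [Qset, Finset.mem_filter, Finset.mem_product, Finset.mem_range]
            omega
          have hor : K ≤ p.1 ∨ K ≤ p.2 := by omega
          have hfp : fp ℓ u t p = ((p.1 : ℝ) * u p.1 t) * ((p.2 : ℝ) * u p.2 t) := by
            unfold fp; rw [if_pos hcond]; ring
          rcases hor with hor | hor
          · calc fp ℓ u t p = ((p.1 : ℝ) * u p.1 t) * ((p.2 : ℝ) * u p.2 t) := hfp
              _ = (if K ≤ p.1 then (p.1 : ℝ) * u p.1 t else 0) * ((p.2 : ℝ) * u p.2 t) := by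
                  rw [if_pos hor]
              _ ≤ h p := le_add_of_nonneg_right
                  (mul_nonneg (term_nonneg hu ht p.1) (tail_term_nonneg hu ht K p.2))
          · calc fp ℓ u t p = ((p.1 : ℝ) * u p.1 t) * ((p.2 : ℝ) * u p.2 t) := hfp
              _ = ((p.1 : ℝ) * u p.1 t) * (if K ≤ p.2 then (p.2 : ℝ) * u p.2 t else 0) := by
                  rw [if_pos hor]
              _ ≤ h p := le_add_of_nonneg_left
                  (mul_nonneg (tail_term_nonneg hu ht K p.1) (term_nonneg hu ht p.2))
        · have : fp ℓ u t p = 0 := by unfold fp; rw [if_neg hcond]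
          rw [this]; exact hh_nonneg p
      · exact (fp_summable hu ht).subtype _
      · exact hh_summable
    calc (∑' (x : ↑((↑(Qset ℓ N) : Set (ℕ × ℕ))ᶜ)), fp ℓ u t ↑x) ≤ ∑' p, h p := hle
      _ = tailf u K t * m1f u t + m1f u t * tailf u K t := hh_tsum
      _ ≤ tailf u K t * C + C * tailf u K t := by
          have h1 := tail_nonneg hu ht K
          have h2 := hC t ht
          have h3 := m1_nonneg hu ht
          nlinarith
      _ = 2 * C * tailf u K t := by ring

end helpers6

section helpers7

variable {ℓ : ℕ} {T : ℝ} {u : ℕ → ℝ → ℝ}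

theorem sum_gB_range (N : ℕ) (t : ℝ) :
    ∑ n ∈ Finset.Icc 1 N, gB ℓ u t n = ∑ n ∈ Finset.range (N + 1), gB ℓ u t n := by
  apply Finset.sum_subset
  · intro x hx
    simp only [Finset.mem_Icc] at hx
    simp only [Finset.mem_range]
    omega
  · intro x hx hnx
    simp only [Finset.mem_range] at hx
    simp only [Finset.mem_Icc] at hnx
    have : x = 0 := by omega
    subst this
    unfold gB
    rw [if_neg (by omega)]

theorem SN_eq (N : ℕ) (t : ℝ) :
    ∑ n ∈ Finset.Icc 1 N, coagRHS ℓ u n t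
    = (1 / Mfun ℓ u t) *
      ((∑ n ∈ Finset.Icc 1 N, ∑ i ∈ Finset.Icc 1 (n + ℓ - 1),
          (i : ℝ) * ((n + ℓ - i : ℕ) : ℝ) * u i t * u (n + ℓ - i) t)
        - 2 * ∑ n ∈ Finset.Icc 1 N, gB ℓ u t n) := by
  have step : ∀ n ∈ Finset.Icc 1 N, coagRHS ℓ u n t
      = (1 / Mfun ℓ u t) *
        ((∑ i ∈ Finset.Icc 1 (n + ℓ - 1),
            (i : ℝ) * ((n + ℓ - i : ℕ) : ℝ) * u i t * u (n + ℓ - i) t)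
          - 2 * gB ℓ u t n) := by
    intro n hn
    simp only [Finset.mem_Icc] at hn
    unfold coagRHS gB tailf
    rw [if_pos hn.1]
    ring
  rw [Finset.sum_congr rfl step, ← Finset.mul_sum, Finset.sum_sub_distrib]
  congr 1
  rw [Finset.mul_sum]

theorem SN_unif (hu : IsFiniteMassSolution ℓ T u) (hℓ : 1 ≤ ℓ) (hT : 0 < T) :
    TendstoUniformlyOn (fun N t => ∑ n ∈ Finset.Icc 1 N, coagRHS ℓ u n t)
      (fun _ => (-1 : ℝ)) atTop (Set.Icc 0 T) := by
  obtain ⟨C, hC1, hC⟩ := exists_m1_bound hu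
  obtain ⟨δ, hδ0, hδ⟩ := exists_M_lb hu hT
  have hC0 : (0 : ℝ) < C := lt_of_lt_of_le one_pos hC1
  rw [Metric.tendstoUniformlyOn_iff]
  intro ε hε
  set ε' : ℝ := δ * ε / (8 * C) with hε'def
  have hε' : 0 < ε' := by positivity
  obtain ⟨K₀, hK₀⟩ := eventually_atTop.mp (tail_small hu hε')
  rw [eventually_atTop]
  refine ⟨2 * K₀ + 2, fun N hN t ht => ?_⟩
  have hMt : δ ≤ Mfun ℓ u t := hδ t ht
  have hM0 : 0 < Mfun ℓ u t := lt_of_lt_of_le hδ0 hMt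
  set M := Mfun ℓ u t with hM
  set A := ∑ p ∈ Qset ℓ N, fp ℓ u t p with hA
  set B := ∑ n ∈ Finset.range (N + 1), gB ℓ u t n with hB
  have hSNval : (∑ n ∈ Finset.Icc 1 N, coagRHS ℓ u n t) = (1 / M) * (A - 2 * B) := by
    rw [SN_eq, A_eq hℓ, sum_gB_range]
  obtain ⟨e1, e2⟩ := A_tail_bound hu ht hC N
  obtain ⟨e3, e4⟩ := B_tail_bound hu ht hC N
  rw [← hM, ← hA] at e1 e2
  rw [← hM, ← hB] at e3 e4
  have t1 : tailf u (N / 2 + 1) t < ε' := hK₀ _ (by omega) t ht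
  have t2 : tailf u (N + 1) t < ε' := hK₀ _ (by omega) t ht
  have e2' : M - A ≤ 2 * C * ε' := by nlinarith
  have e4' : M - B ≤ C * ε' := by nlinarith
  rw [Real.dist_eq, hSNval]
  have key : |(-1 : ℝ) - (1 / M) * (A - 2 * B)| = (1 / M) * |A - M + 2 * (M - B)| := by
    have h1 : (-1 : ℝ) - (1 / M) * (A - 2 * B) = (1 / M) * (-(A - M + 2 * (M - B))) := by
      field_simp
      ring
    rw [h1, abs_mul, abs_neg, abs_of_pos (show (0:ℝ) < 1 / M by positivity)]
  rw [key]
  have habs : |A - M + 2 * (M - B)| ≤ (M - A) + 2 * (M - B) := by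
    rw [abs_le]
    constructor <;> linarith
  have hc0 : 0 ≤ (M - A) + 2 * (M - B) := by linarith
  calc (1 / M) * |A - M + 2 * (M - B)|
      ≤ (1 / δ) * ((M - A) + 2 * (M - B)) := by
        apply mul_le_mul
        · exact one_div_le_one_div_of_le hδ0 hMt
        · exact habs
        · exact abs_nonneg _
        · positivity
    _ ≤ (1 / δ) * (2 * C * ε' + 2 * (C * ε')) := by
        apply mul_le_mul_of_nonneg_left _ (by positivity)
        linarith
    _ = ε / 2 := by
        rw [hε'def]
        field_simp
        ring
    _ < ε := by linarith

end helpers7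

section helpers8

variable {ℓ : ℕ} {T : ℝ} {u : ℕ → ℝ → ℝ}

theorem coagRHS_contOn (hu : IsFiniteMassSolution ℓ T u) {n : ℕ} (hn : 1 ≤ n) :
    ContinuousOn (coagRHS ℓ u n) (Set.Icc 0 T) := by
  have h1 : ContinuousOn (fun t => 1 / Mfun ℓ u t) (Set.Icc 0 T) :=
    continuousOn_const.div (Mfun_contOn hu) (fun t ht => (hu.Mpos t ht).ne')
  have h2 : ContinuousOn (fun t => ∑ i ∈ Finset.Icc 1 (n + ℓ - 1),
      (i : ℝ) * ((n + ℓ - i : ℕ) : ℝ) * u i t * u (n + ℓ - i) t) (Set.Icc 0 T) := by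
    apply continuousOn_finset_sum
    intro i hi
    simp only [Finset.mem_Icc] at hi
    exact (continuousOn_const.mul
      (hu.contDiff i hi.1).continuousOn).mul
      (hu.contDiff (n + ℓ - i) (by omega) ).continuousOn
  have h3 : ContinuousOn (tailf u (max 1 (ℓ + 1 - n))) (Set.Icc 0 T) :=
    tail_contOn hu _
  have h4 : ContinuousOn (fun t => 2 * (n : ℝ) * u n t *
      tailf u (max 1 (ℓ + 1 - n)) t) (Set.Icc 0 T) :=
    (continuousOn_const.mul (hu.contDiff n hn).continuousOn).mul h3
  exact h1.mul (h2.sub h4)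

theorem FTC_N (hu : IsFiniteMassSolution ℓ T u) {t : ℝ}
    (ht : t ∈ Set.Icc (0 : ℝ) T) (N : ℕ) :
    (∫ s in (0 : ℝ)..t, ∑ n ∈ Finset.Icc 1 N, coagRHS ℓ u n s)
      = (∑ n ∈ Finset.Icc 1 N, u n t) - ∑ n ∈ Finset.Icc 1 N, u n 0 := by
  obtain ⟨ht0, htT⟩ := ht
  apply intervalIntegral.integral_eq_sub_of_hasDeriv_right_of_le ht0
  · apply continuousOn_finset_sum
    intro n hn
    simp only [Finset.mem_Icc] at hn
    exact ((hu.contDiff n hn.1).continuousOn).mono (Set.Icc_subset_Icc le_rfl htT)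
  · intro x hx
    have hx' : x ∈ Set.Icc (0 : ℝ) T := ⟨hx.1.le, le_trans hx.2.le htT⟩
    have hxo : Set.Icc (0 : ℝ) T ∈ 𝓝 x :=
      Icc_mem_nhds hx.1 (lt_of_lt_of_le hx.2 htT)
    apply HasDerivAt.hasDerivWithinAt
    apply HasDerivAt.fun_sum
    intro n hn
    simp only [Finset.mem_Icc] at hn
    exact (hu.ode n hn.1 x hx').hasDerivAt hxo
  · apply ContinuousOn.intervalIntegrable
    apply ContinuousOn.mono (s := Set.Icc (0 : ℝ) T)
    · apply continuousOn_finset_sum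
      intro n hn
      simp only [Finset.mem_Icc] at hn
      exact coagRHS_contOn hu hn.1
    · rw [Set.uIcc_of_le ht0]
      exact Set.Icc_subset_Icc le_rfl htT

theorem m0_summable (hu : IsFiniteMassSolution ℓ T u) {t : ℝ}
    (ht : t ∈ Set.Icc (0 : ℝ) T) :
    Summable (fun i : ℕ => if 1 ≤ i then u i t else 0) := by
  apply Summable.of_nonneg_of_le _ _ (m1_summable hu ht)
  · intro i
    split
    · next h => exact hu.nonneg i h t ht
    · exact le_rfl
  · intro i
    split
    · next h =>
      have h1 : (1 : ℝ) ≤ (i : ℝ) := by exact_mod_cast h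
      have h2 := hu.nonneg i h t ht
      nlinarith
    · exact term_nonneg hu ht i

theorem m0_tendsto (hu : IsFiniteMassSolution ℓ T u) {t : ℝ}
    (ht : t ∈ Set.Icc (0 : ℝ) T) :
    Tendsto (fun N => ∑ n ∈ Finset.Icc 1 N, u n t) atTop
      (𝓝 (∑' i : ℕ, if 1 ≤ i then u i t else 0)) := by
  have h1 := (m0_summable hu ht).hasSum.tendsto_sum_nat
  have h2 : Tendsto (fun N => ∑ i ∈ Finset.range (N + 1),
      (if 1 ≤ i then u i t else 0)) atTop
      (𝓝 (∑' i : ℕ, if 1 ≤ i then u i t else 0)) :=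
    h1.comp (tendsto_add_atTop_nat 1)
  apply h2.congr
  intro N
  rw [show (∑ n ∈ Finset.Icc 1 N, u n t)
      = ∑ n ∈ Finset.Icc 1 N, (if 1 ≤ n then u n t else 0) from
    Finset.sum_congr rfl (fun n hn => by
      simp only [Finset.mem_Icc] at hn
      rw [if_pos hn.1])]
  rw [eq_comm]
  apply Finset.sum_subset
  · intro x hx
    simp only [Finset.mem_Icc] at hx
    simp only [Finset.mem_range]
    omega
  · intro x hx hnx
    simp only [Finset.mem_range] at hx
    simp only [Finset.mem_Icc] at hnx
    rw [if_neg (by omega)]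

theorem integral_tendsto (hu : IsFiniteMassSolution ℓ T u) (hℓ : 1 ≤ ℓ) (hT : 0 < T)
    {t : ℝ} (ht : t ∈ Set.Icc (0 : ℝ) T) :
    Tendsto (fun N => ∫ s in (0 : ℝ)..t, ∑ n ∈ Finset.Icc 1 N, coagRHS ℓ u n s)
      atTop (𝓝 (-t)) := by
  have huni := SN_unif hu hℓ hT
  have hsub : Set.uIoc (0 : ℝ) t ⊆ Set.Icc (0 : ℝ) T := by
    rw [Set.uIoc_of_le ht.1]
    exact fun x hx => ⟨hx.1.le, le_trans hx.2 ht.2⟩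
  have key := intervalIntegral.tendsto_integral_filter_of_dominated_convergence
    (μ := MeasureTheory.volume) (a := (0:ℝ)) (b := t)
    (F := fun N s => ∑ n ∈ Finset.Icc 1 N, coagRHS ℓ u n s)
    (f := fun _ => (-1 : ℝ)) (bound := fun _ => 2)
    (by
      filter_upwards with N
      apply ContinuousOn.aestronglyMeasurable _ measurableSet_uIoc
      apply ContinuousOn.mono (s := Set.Icc (0 : ℝ) T) _ hsub
      apply continuousOn_finset_sum
      intro n hn
      simp only [Finset.mem_Icc] at hn
      exact coagRHS_contOn hu hn.1)
    (by
      have h1 := Metric.tendstoUniformlyOn_iff.mp huni 1 one_pos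
      filter_upwards [h1] with N hN
      apply MeasureTheory.ae_of_all
      intro x hx
      have h2 := hN x (hsub hx)
      rw [Real.dist_eq] at h2
      have : |∑ n ∈ Finset.Icc 1 N, coagRHS ℓ u n x| ≤
          |(-1 : ℝ) - ∑ n ∈ Finset.Icc 1 N, coagRHS ℓ u n x| + 1 := by
        have := abs_sub_abs_le_abs_sub (∑ n ∈ Finset.Icc 1 N, coagRHS ℓ u n x) (-1 : ℝ)
        rw [abs_neg, abs_one, abs_sub_comm] at this
        linarith
      rw [Real.norm_eq_abs]
      linarith)
    intervalIntegrable_const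
    (by
      apply MeasureTheory.ae_of_all
      intro x hx
      exact huni.tendsto_at (hsub hx))
  have : (∫ _ in (0 : ℝ)..t, (-1 : ℝ)) = -t := by simp
  rwa [this] at key

end helpers8

/-- for `ℓ ≥ 1` and a finite mass solution on `[0,T]`,
the zeroth moment satisfies `m₀(t) = m₀(0) − t`. -/
theorem zeroth_moment_loss (ℓ : ℕ) (hℓ : 1 ≤ ℓ) (T : ℝ) (hT : 0 < T)
    (u : ℕ → ℝ → ℝ) (hu : IsFiniteMassSolution ℓ T u) :
    ∀ t ∈ Set.Icc (0 : ℝ) T, moment u 0 t = moment u 0 0 - t := by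
  intro t ht
  have h0mem : (0 : ℝ) ∈ Set.Icc (0 : ℝ) T := ⟨le_rfl, hT.le⟩
  have hmom : ∀ s : ℝ, moment u 0 s = ∑' i : ℕ, if 1 ≤ i then u i s else 0 := by
    intro s
    apply tsum_congr
    intro i
    split
    · rw [pow_zero, one_mul]
    · rfl
  have h1 : Tendsto (fun N => (∑ n ∈ Finset.Icc 1 N, u n t)
      - ∑ n ∈ Finset.Icc 1 N, u n 0) atTop
      (𝓝 ((∑' i : ℕ, if 1 ≤ i then u i t else 0)
        - ∑' i : ℕ, if 1 ≤ i then u i 0 else 0)) :=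
    (m0_tendsto hu ht).sub (m0_tendsto hu h0mem)
  have h2 : Tendsto (fun N => (∑ n ∈ Finset.Icc 1 N, u n t)
      - ∑ n ∈ Finset.Icc 1 N, u n 0) atTop (𝓝 (-t)) := by
    apply (integral_tendsto hu hℓ hT ht).congr
    intro N
    exact FTC_N hu ht N
  have h3 := tendsto_nhds_unique h1 h2
  rw [hmom t, hmom 0]
  linarith
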